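/- Let N ≤ M be positive integers and let T be a positive integer number of rounds. Suppose that in each round t = 1,...,T each of the N players independently (across players and across rounds) chooses an arm uniformly at random from {1,...,M}. For each player n and arm i let V_{n,i} denote the number of rounds in which player n chose arm i and no other player chose arm i. Then P( min_{n,i} V_{n,i} < T/(5M) ) \le N M exp( - T / (18 M^2) ). -/

import Mathlib

open MeasureTheory ProbabilityTheory Real
open scoped Classical

section helpers

lemma aux_exp_quad {x : ℝ} (hx : x ≤ 0) : Real.exp x ≤ 1 + x + x ^ 2 / 2 := by
  have h1 : 1 + (-x) + (-x) ^ 2 / 2 ≤ Real.exp (-x) :=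
    Real.quadratic_le_exp_of_nonneg (by linarith)
  have h2 : Real.exp x * Real.exp (-x) = 1 := by rw [← Real.exp_add]; simp
  have hp := Real.exp_pos x
  have hq := Real.exp_pos (-x)
  nlinarith [sq_nonneg x, sq_nonneg (x^2)]

lemma aux_pow_ge {M : ℕ} (hM : 2 ≤ M) :
    (367/1000 : ℝ) ≤ (1 - 1/(M:ℝ)) ^ (M - 1) := by
  have hM1 : (1:ℝ) ≤ (M:ℝ) - 1 := by
    have : (2:ℝ) ≤ (M:ℝ) := by exact_mod_cast hM
    linarith
  have hMpos : (0:ℝ) < M := by linarith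
  have hMm1 : (0:ℝ) < (M:ℝ) - 1 := by linarith
  have key : Real.exp (-(1/((M:ℝ)-1))) ≤ 1 - 1/(M:ℝ) := by
    have h1 : 1 + 1/((M:ℝ)-1) ≤ Real.exp (1/((M:ℝ)-1)) := by
      have := Real.add_one_le_exp (1/((M:ℝ)-1)); linarith
    have h2 : (1 - 1/(M:ℝ)) * (1 + 1/((M:ℝ)-1)) = 1 := by field_simp; ring
    have h3 : (0:ℝ) < 1 + 1/((M:ℝ)-1) := by positivity
    have h4 : Real.exp (-(1/((M:ℝ)-1))) * Real.exp (1/((M:ℝ)-1)) = 1 := by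
      rw [← Real.exp_add]; simp
    have hq := Real.exp_pos (1/((M:ℝ)-1))
    nlinarith [Real.exp_pos (-(1/((M:ℝ)-1)))]
  have hpow : Real.exp (-(1/((M:ℝ)-1))) ^ (M-1) ≤ (1 - 1/(M:ℝ)) ^ (M-1) :=
    pow_le_pow_left₀ (Real.exp_pos _).le key _
  have hcast : ((M - 1 : ℕ) : ℝ) = (M:ℝ) - 1 := by
    have : 1 ≤ M := by omega
    push_cast [this]; ring
  have hexp : Real.exp (-(1/((M:ℝ)-1))) ^ (M-1) = Real.exp (-1) := by
    rw [← Real.exp_nat_mul, hcast]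
    congr 1
    field_simp
  rw [hexp] at hpow
  refine le_trans ?_ hpow
  have h9 := Real.exp_one_lt_d9
  have : Real.exp 1 * Real.exp (-1) = 1 := by rw [← Real.exp_add]; simp
  nlinarith [Real.exp_pos (-1), Real.exp_pos 1]

lemma aux_arith {M : ℕ} (hM : 2 ≤ M) {c : ℝ} (hc1 : 367/1000 ≤ c) (hc2 : c ≤ 1) :
    1/(18*(M:ℝ)^2) ≤ (c/M - 1/(5*M))^2 / (2*(c/M)) := by
  have hMR : (2:ℝ) ≤ (M:ℝ) := by exact_mod_cast hM
  have hMpos : (0:ℝ) < M := by linarith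
  have hcpos : (0:ℝ) < c := by linarith
  have key : c ≤ 18*(c - 1/5)^2 := by nlinarith [sq_nonneg (c - 367/1000)]
  rw [div_le_div_iff₀ (by positivity) (by positivity)]
  have h1 : (c/M - 1/(5*M)) = (c - 1/5)/M := by field_simp
  rw [h1]
  have h2 : ((c - 1/5)/M)^2 = (c-1/5)^2/M^2 := by ring
  rw [h2]
  have expand : (c - 1/5)^2 / M^2 * (18*(M:ℝ)^2) = 18*(c-1/5)^2 := by field_simp
  rw [expand]
  have h4 : 2*(c/M) ≤ c := by
    rw [mul_div_assoc', div_le_iff₀ hMpos]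
    nlinarith
  linarith

lemma per_pair {Ω : Type*} [MeasurableSpace Ω] (P : Measure Ω) [IsProbabilityMeasure P]
    {T : ℕ} (hT : 0 < T) (E : Fin T → Set Ω) (hEmeas : ∀ t, MeasurableSet (E t))
    (hindep : iIndepSet E P) {p : ℝ} (hp : ∀ t, (P (E t)).toReal = p)
    {q : ℝ} (hq0 : 0 ≤ q) (hqp : q < p) :
    (P {ω | ((Finset.univ.filter (fun t => ω ∈ E t)).card : ℝ) ≤ q * T}).toReal
      ≤ Real.exp (-(T:ℝ) * (p-q)^2 / (2*p)) := by
  have hppos : 0 < p := lt_of_le_of_lt hq0 hqp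
  set X : Fin T → Ω → ℝ := fun t => (E t).indicator (fun _ => (1:ℝ)) with hX
  have hXmeas : ∀ t, Measurable (X t) := fun t => measurable_const.indicator (hEmeas t)
  have hXindep : iIndepFun X P := hindep.iIndepFun_indicator
  set lam : ℝ := -(p - q)/p with hlam
  have hlam0 : lam ≤ 0 := by
    rw [hlam]
    apply div_nonpos_of_nonpos_of_nonneg <;> linarith
  set S : Ω → ℝ := ∑ t, X t with hS
  have hSapp : ∀ ω, S ω = ∑ t, X t ω := fun ω => by simp [hS]
  have hScard : ∀ ω, S ω = ((Finset.univ.filter (fun t => ω ∈ E t)).card : ℝ) := by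
    intro ω
    rw [hSapp, Finset.card_filter]
    push_cast
    apply Finset.sum_congr rfl
    intro t _
    by_cases h : ω ∈ E t <;> simp [hX, Set.indicator_apply, h]
  have hSmeas : Measurable S := by
    have h : Measurable fun ω => ∑ t, X t ω :=
      Finset.measurable_sum Finset.univ (fun t _ => hXmeas t)
    have he : S = fun ω => ∑ t, X t ω := funext hSapp
    rw [he]; exact h
  have hS0 : ∀ ω, 0 ≤ S ω := by
    intro ω; rw [hSapp]
    apply Finset.sum_nonneg
    intro t _
    exact Set.indicator_nonneg (fun _ _ => zero_le_one) ω
  have hint : Integrable (fun ω => Real.exp (lam * S ω)) P := by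
    apply Integrable.mono' (integrable_const (1:ℝ))
    · exact ((Real.continuous_exp).comp (continuous_const.mul continuous_id)).measurable.comp
        hSmeas |>.aestronglyMeasurable
    · filter_upwards with ω
      rw [Real.norm_eq_abs, abs_of_pos (Real.exp_pos _)]
      exact Real.exp_le_one_iff.2 (mul_nonpos_of_nonpos_of_nonneg hlam0 (hS0 ω))
  have hmgf : ∀ t, mgf (X t) P lam = 1 + (Real.exp lam - 1) * p := by
    intro t
    have hfun : (fun ω => Real.exp (lam * X t ω))
        = fun ω => 1 + (Real.exp lam - 1) * (E t).indicator (fun _ => (1:ℝ)) ω := by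
      funext ω
      by_cases h : ω ∈ E t <;> simp [hX, Set.indicator_apply, h]
    rw [mgf, hfun]
    rw [integral_add (integrable_const _) ((integrable_const _ |>.indicator (hEmeas t)).const_mul _),
      MeasureTheory.integral_const_mul, integral_indicator_const _ (hEmeas t)]
    simp [measureReal_def, hp t]
  have hmgf_le : ∀ t, mgf (X t) P lam ≤ Real.exp (p * lam + p * lam^2/2) := by
    intro t
    rw [hmgf t]
    have h1 : 1 + (Real.exp lam - 1) * p ≤ Real.exp ((Real.exp lam - 1) * p) := by
      have := Real.add_one_le_exp ((Real.exp lam - 1) * p); linarith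
    refine h1.trans (Real.exp_le_exp.2 ?_)
    have h2 : Real.exp lam - 1 ≤ lam + lam^2/2 := by
      have := aux_exp_quad hlam0; linarith
    nlinarith
  have hcher := measure_le_le_exp_mul_mgf (μ := P) (X := S) (q * T) hlam0 hint
  have hset : {ω | ((Finset.univ.filter (fun t => ω ∈ E t)).card : ℝ) ≤ q * T}
      = {ω | S ω ≤ q * T} := by
    ext ω; simp [hScard ω]
  rw [hset]
  refine hcher.trans ?_
  have hprod : mgf S P lam ≤ Real.exp (p * lam + p * lam^2/2) ^ T := by
    rw [hS, hXindep.mgf_sum hXmeas]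
    calc ∏ t : Fin T, mgf (X t) P lam
        ≤ ∏ _t : Fin T, Real.exp (p * lam + p * lam^2/2) :=
          Finset.prod_le_prod (fun t _ => mgf_nonneg) (fun t _ => hmgf_le t)
      _ = Real.exp (p * lam + p * lam^2/2) ^ T := by
          rw [Finset.prod_const, Finset.card_univ, Fintype.card_fin]
  calc Real.exp (-lam * (q*T)) * mgf S P lam
      ≤ Real.exp (-lam * (q*T)) * Real.exp (p * lam + p * lam^2/2) ^ T :=
        mul_le_mul_of_nonneg_left hprod (Real.exp_pos _).le
    _ = Real.exp (-lam * (q*T) + T * (p * lam + p * lam^2/2)) := by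
        rw [← Real.exp_nat_mul, ← Real.exp_add]
    _ = Real.exp (-(T:ℝ) * (p-q)^2 / (2*p)) := by
        congr 1
        rw [hlam]
        field_simp
        ring

end helpers

/-- With `N ≤ M` players choosing arms independently and uniformly at random
among `M` arms in each of `T` rounds (independently across players and rounds), the number
`V_{n,i}` of collision-free visits of player `n` to arm `i` satisfies
`P(min_{n,i} V_{n,i} < T/(5M)) ≤ N·M·exp(-T/(18M²))`. -/
theorem prob_few_collision_free_visits {Ω : Type*} [MeasurableSpace Ω] (P : Measure Ω)
    [IsProbabilityMeasure P]
    (N M T : ℕ) (hN : 0 < N) (hNM : N ≤ M) (hT : 0 < T)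
    (a : Fin T × Fin N → Ω → Fin M)
    (hmeas : ∀ q, Measurable (a q))
    (hunif : ∀ q (j : Fin M), P {ω | a q ω = j} = (M : ENNReal)⁻¹)
    (hindep : iIndepFun a P) :
    P {ω | ∃ (n : Fin N) (i : Fin M),
        (((Finset.univ.filter (fun t : Fin T =>
            a (t, n) ω = i ∧ ∀ m, m ≠ n → a (t, m) ω ≠ i)).card : ℝ)
          < (T : ℝ) / (5 * M))}
      ≤ ENNReal.ofReal ((N : ℝ) * M * Real.exp (-(T : ℝ) / (18 * M ^ 2))) := by
  by_cases hM1 : M = 1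
  · -- degenerate case: M = 1 forces N = 1 and the event is empty
    have hN1 : N = 1 := le_antisymm (hM1 ▸ hNM) hN
    have hsub : Subsingleton (Fin M) := by rw [hM1]; infer_instance
    have hsubN : Subsingleton (Fin N) := by rw [hN1]; infer_instance
    have hempty : {ω : Ω | ∃ (n : Fin N) (i : Fin M),
        (((Finset.univ.filter (fun t : Fin T =>
            a (t, n) ω = i ∧ ∀ m, m ≠ n → a (t, m) ω ≠ i)).card : ℝ)
          < (T : ℝ) / (5 * M))} = ∅ := by
      ext ω
      simp only [Set.mem_setOf_eq, Set.mem_empty_iff_false, iff_false, not_exists]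
      intro n i h
      have hfilter : (Finset.univ.filter (fun t : Fin T =>
          a (t, n) ω = i ∧ ∀ m, m ≠ n → a (t, m) ω ≠ i)) = Finset.univ := by
        apply Finset.filter_true_of_mem
        intro t _
        refine ⟨Subsingleton.elim _ _, fun m hm => absurd (Subsingleton.elim m n) hm⟩
      rw [hfilter] at h
      simp only [Finset.card_univ, Fintype.card_fin] at h
      rw [hM1] at h
      have hT1 : (1:ℝ) ≤ (T:ℝ) := by exact_mod_cast hT
      norm_num at h
      linarith
    rw [hempty]
    simp
  -- main case : M ≥ 2
  have hM : 2 ≤ M := by omega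
  have hMR : (2:ℝ) ≤ (M:ℝ) := by exact_mod_cast hM
  have hMpos : (0:ℝ) < M := by linarith
  set c : ℝ := (1 - 1/(M:ℝ))^(N-1) with hc
  set p : ℝ := c / M with hpdef
  set q : ℝ := 1/(5*(M:ℝ)) with hqdef
  have hbase0 : (0:ℝ) ≤ 1 - 1/(M:ℝ) := by
    have : 1/(M:ℝ) ≤ 1/2 := by
      apply div_le_div_of_nonneg_left <;> linarith
    linarith
  have hbase1 : 1 - 1/(M:ℝ) ≤ 1 := by
    have : (0:ℝ) ≤ 1/(M:ℝ) := by positivity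
    linarith
  have hc1 : (367/1000 : ℝ) ≤ c := by
    refine le_trans (aux_pow_ge hM) ?_
    rw [hc]
    exact pow_le_pow_of_le_one hbase0 hbase1 (by omega)
  have hc2 : c ≤ 1 := pow_le_one₀ hbase0 hbase1
  have hq0 : (0:ℝ) ≤ q := by rw [hqdef]; positivity
  have hqp : q < p := by
    rw [hqdef, hpdef]
    rw [show (1:ℝ)/(5*(M:ℝ)) = (1/5)/M by ring]
    exact (div_lt_div_iff_of_pos_right hMpos).2 (by linarith)
  have hppos : 0 < p := lt_of_le_of_lt hq0 hqp
  -- per-pair bound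
  have key : ∀ (n : Fin N) (i : Fin M),
      P {ω | (((Finset.univ.filter (fun t : Fin T =>
            a (t, n) ω = i ∧ ∀ m, m ≠ n → a (t, m) ω ≠ i)).card : ℝ)
          < (T : ℝ) / (5 * M))}
        ≤ ENNReal.ofReal (Real.exp (-(T : ℝ) / (18 * M ^ 2))) := by
    intro n i
    set Bs : Fin T × Fin N → Set (Fin M) :=
      fun q' => if q'.2 = n then {i} else {i}ᶜ with hBs
    set B : Fin T × Fin N → Set Ω := fun q' => a q' ⁻¹' Bs q' with hB
    set E : Fin T → Set Ω := fun t => ⋂ m, B (t, m) with hE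
    have hBsmeas : ∀ q', MeasurableSet (Bs q') := by
      intro q'
      rw [hBs]
      dsimp only
      split
      · exact measurableSet_singleton i
      · exact (measurableSet_singleton i).compl
    have hBmeas : ∀ q', MeasurableSet (B q') := fun q' => hmeas q' (hBsmeas q')
    have hBcomap : ∀ q', MeasurableSet[MeasurableSpace.comap (a q') inferInstance] (B q') :=
      fun q' => ⟨Bs q', hBsmeas q', rfl⟩
    have hEmeas : ∀ t, MeasurableSet (E t) := fun t =>
      MeasurableSet.iInter (fun m => hBmeas (t, m))
    have hPE : ∀ s : Finset (Fin T), P (⋂ t ∈ s, E t) = ∏ t ∈ s, ∏ m, P (B (t, m)) := by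
      intro s
      have hseteq : (⋂ t ∈ s, E t) = ⋂ q' ∈ s ×ˢ (Finset.univ : Finset (Fin N)), B q' := by
        ext ω
        simp only [Set.mem_iInter, hE, Finset.mem_product, Finset.mem_univ, and_true]
        constructor
        · rintro h ⟨t, m⟩ ht; exact h t ht m
        · intro h t ht m; exact h (t, m) ht
      rw [hseteq, hindep.meas_biInter (fun q' _ => hBcomap q'), Finset.prod_product]
    have hEval : ∀ t, P (E t) = ∏ m, P (B (t, m)) := by
      intro t
      have := hPE {t}
      simpa using this
    have hiIndep : iIndepSet E P := by
      rw [iIndepSet_iff_meas_biInter hEmeas]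
      intro s
      rw [hPE s]
      exact Finset.prod_congr rfl fun t _ => (hEval t).symm
    have hPB : ∀ t m, P (B (t, m)) =
        if m = n then (M:ENNReal)⁻¹ else 1 - (M:ENNReal)⁻¹ := by
      intro t m
      by_cases h : m = n
      · rw [if_pos h, hB]
        dsimp only
        rw [hBs]
        dsimp only
        rw [if_pos h]
        rw [show a (t, m) ⁻¹' {i} = {ω | a (t, m) ω = i} from by ext ω; simp]
        exact hunif (t, m) i
      · rw [if_neg h, hB]
        dsimp only
        rw [hBs]
        dsimp only
        rw [if_neg h]
        have hpre : a (t, m) ⁻¹' ({i}ᶜ) = {ω | a (t, m) ω = i}ᶜ := by ext ω; simp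
        rw [hpre, measure_compl (hmeas (t, m) (measurableSet_singleton i) |>.congr ?_)
            (measure_ne_top _ _), hunif (t, m) i, measure_univ]
        · ext ω; simp
      -- may need adjustment
    have hprodval : ∀ t, ∏ m, P (B (t, m))
        = (M:ENNReal)⁻¹ * (1 - (M:ENNReal)⁻¹)^(N-1) := by
      intro t
      simp only [hPB]
      rw [← Finset.mul_prod_erase Finset.univ _ (Finset.mem_univ n), if_pos rfl]
      congr 1
      rw [Finset.prod_congr rfl (fun m hm => if_neg (Finset.ne_of_mem_erase hm)),
        Finset.prod_const, Finset.card_erase_of_mem (Finset.mem_univ n),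
        Finset.card_univ, Fintype.card_fin]
    have hMinv_le : (M:ENNReal)⁻¹ ≤ 1 := by
      apply ENNReal.inv_le_one.2
      exact_mod_cast Nat.one_le_cast.2 (by omega)
    have hptoReal : ∀ t, (P (E t)).toReal = p := by
      intro t
      rw [hEval t, hprodval t, ENNReal.toReal_mul, ENNReal.toReal_pow,
        ENNReal.toReal_sub_of_le hMinv_le ENNReal.one_ne_top]
      rw [ENNReal.toReal_inv, ENNReal.toReal_natCast, ENNReal.toReal_one]
      rw [hpdef, hc]
      rw [show (M:ℝ)⁻¹ = 1/(M:ℝ) from (one_div _).symm]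
      ring
    -- subset into the per_pair event
    have hsub : {ω | (((Finset.univ.filter (fun t : Fin T =>
            a (t, n) ω = i ∧ ∀ m, m ≠ n → a (t, m) ω ≠ i)).card : ℝ)
          < (T : ℝ) / (5 * M))}
        ⊆ {ω | ((Finset.univ.filter (fun t => ω ∈ E t)).card : ℝ) ≤ q * T} := by
      intro ω h
      simp only [Set.mem_setOf_eq] at h ⊢
      have hiff : ∀ t : Fin T,
          (a (t, n) ω = i ∧ ∀ m, m ≠ n → a (t, m) ω ≠ i) ↔ ω ∈ E t := by
        intro t
        rw [hE]
        simp only [Set.mem_iInter, hB, Set.mem_preimage, hBs]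
        constructor
        · rintro ⟨h1, h2⟩ m
          by_cases hm : m = n
          · subst hm; simp [h1]
          · simp only [if_neg hm, Set.mem_compl_iff, Set.mem_singleton_iff]
            exact h2 m hm
        · intro h
          constructor
          · have := h n; simpa using this
          · intro m hm
            have := h m
            simpa [if_neg hm] using this
      have hfeq : (Finset.univ.filter (fun t : Fin T =>
            a (t, n) ω = i ∧ ∀ m, m ≠ n → a (t, m) ω ≠ i))
          = Finset.univ.filter (fun t => ω ∈ E t) :=
        Finset.filter_congr (fun t _ => hiff t)
      rw [hfeq] at h
      have hqt : q * (T:ℝ) = (T:ℝ) / (5 * M) := by rw [hqdef]; ring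
      rw [hqt]
      exact h.le
    have hperp := per_pair P hT E hEmeas hiIndep hptoReal hq0 hqp
    have hexp_le : Real.exp (-(T:ℝ) * (p-q)^2 / (2*p)) ≤ Real.exp (-(T:ℝ) / (18 * M ^ 2)) := by
      apply Real.exp_le_exp.2
      have harith := aux_arith hM hc1 hc2
      rw [← hpdef, ← hqdef] at harith
      have hT0 : (0:ℝ) ≤ T := Nat.cast_nonneg T
      have h2 : (T:ℝ) * (1/(18*(M:ℝ)^2)) ≤ (T:ℝ) * ((p - q)^2/(2*p)) :=
        mul_le_mul_of_nonneg_left harith hT0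
      have e1 : (T:ℝ) * (1/(18*(M:ℝ)^2)) = (T:ℝ)/(18*(M:ℝ)^2) := by ring
      have e2 : (T:ℝ) * ((p - q)^2/(2*p)) = (T:ℝ)*(p-q)^2/(2*p) := by ring
      rw [e1, e2] at h2
      have e3 : -(T:ℝ) * (p-q)^2/(2*p) = -((T:ℝ)*(p-q)^2/(2*p)) := by ring
      have e4 : -(T:ℝ)/(18*(M:ℝ)^2) = -((T:ℝ)/(18*(M:ℝ)^2)) := by ring
      rw [e3, e4]
      linarith
    calc P {ω | (((Finset.univ.filter (fun t : Fin T =>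
            a (t, n) ω = i ∧ ∀ m, m ≠ n → a (t, m) ω ≠ i)).card : ℝ)
          < (T : ℝ) / (5 * M))}
        ≤ P {ω | ((Finset.univ.filter (fun t => ω ∈ E t)).card : ℝ) ≤ q * T} :=
          measure_mono hsub
      _ = ENNReal.ofReal ((P {ω | ((Finset.univ.filter (fun t => ω ∈ E t)).card : ℝ)
            ≤ q * T}).toReal) := (ENNReal.ofReal_toReal (measure_ne_top _ _)).symm
      _ ≤ ENNReal.ofReal (Real.exp (-(T:ℝ) * (p-q)^2 / (2*p))) :=
          ENNReal.ofReal_le_ofReal hperp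
      _ ≤ ENNReal.ofReal (Real.exp (-(T : ℝ) / (18 * M ^ 2))) :=
          ENNReal.ofReal_le_ofReal hexp_le
  -- union bound
  have hunion : {ω : Ω | ∃ (n : Fin N) (i : Fin M),
      (((Finset.univ.filter (fun t : Fin T =>
          a (t, n) ω = i ∧ ∀ m, m ≠ n → a (t, m) ω ≠ i)).card : ℝ)
        < (T : ℝ) / (5 * M))}
      = ⋃ (n : Fin N), ⋃ (i : Fin M), {ω | (((Finset.univ.filter (fun t : Fin T =>
          a (t, n) ω = i ∧ ∀ m, m ≠ n → a (t, m) ω ≠ i)).card : ℝ)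
        < (T : ℝ) / (5 * M))} := by
    ext ω; simp [Set.mem_iUnion]
  rw [hunion]
  have hNMe : ENNReal.ofReal ((N : ℝ) * M * Real.exp (-(T : ℝ) / (18 * M ^ 2)))
      = (N : ENNReal) * ((M : ENNReal)
        * ENNReal.ofReal (Real.exp (-(T : ℝ) / (18 * M ^ 2)))) := by
    rw [mul_assoc, ENNReal.ofReal_mul (by positivity), ENNReal.ofReal_mul (by positivity),
      ENNReal.ofReal_natCast, ENNReal.ofReal_natCast]
  rw [hNMe]
  refine le_trans (measure_iUnion_le _) ?_
  rw [tsum_fintype]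
  have hinner : ∀ n : Fin N, P (⋃ (i : Fin M), {ω | (((Finset.univ.filter (fun t : Fin T =>
          a (t, n) ω = i ∧ ∀ m, m ≠ n → a (t, m) ω ≠ i)).card : ℝ)
        < (T : ℝ) / (5 * M))})
      ≤ (M : ENNReal) * ENNReal.ofReal (Real.exp (-(T : ℝ) / (18 * M ^ 2))) := by
    intro n
    refine le_trans (measure_iUnion_le _) ?_
    rw [tsum_fintype]
    calc ∑ i : Fin M, P {ω | (((Finset.univ.filter (fun t : Fin T =>
            a (t, n) ω = i ∧ ∀ m, m ≠ n → a (t, m) ω ≠ i)).card : ℝ)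
          < (T : ℝ) / (5 * M))}
        ≤ ∑ _i : Fin M, ENNReal.ofReal (Real.exp (-(T : ℝ) / (18 * M ^ 2))) :=
          Finset.sum_le_sum (fun i _ => key n i)
      _ = (M : ENNReal) * ENNReal.ofReal (Real.exp (-(T : ℝ) / (18 * M ^ 2))) := by
          rw [Finset.sum_const, Finset.card_univ, Fintype.card_fin, nsmul_eq_mul]
  calc ∑ n : Fin N, P (⋃ (i : Fin M), {ω | (((Finset.univ.filter (fun t : Fin T =>
          a (t, n) ω = i ∧ ∀ m, m ≠ n → a (t, m) ω ≠ i)).card : ℝ)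
        < (T : ℝ) / (5 * M))})
      ≤ ∑ _n : Fin N, (M : ENNReal) * ENNReal.ofReal (Real.exp (-(T : ℝ) / (18 * M ^ 2))) :=
        Finset.sum_le_sum (fun n _ => hinner n)
    _ = (N : ENNReal) * ((M : ENNReal) * ENNReal.ofReal (Real.exp (-(T : ℝ) / (18 * M ^ 2)))) := by
        rw [Finset.sum_const, Finset.card_univ, Fintype.card_fin, nsmul_eq_mul]
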